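/- Let f = (α_f, σ_f) ∈ G_n with σ_f an n-cycle (its cycle through some element is all of {1,…,n}). Then f is strongly reversible in G_n if and only if A(f) = 0. -/

import Mathlib

abbrev Circle1 : Type := AddCircle (1 : ℝ)

abbrev Gn (n : ℕ) : Type := (Fin n → Circle1) × Equiv.Perm (Fin n)

namespace Gn
variable {n : ℕ}

noncomputable instance : Mul (Gn n) := ⟨fun f g => ⟨fun j => g.1 j + f.1 (g.2 j), f.2 * g.2⟩⟩
noncomputable instance : One (Gn n) := ⟨⟨fun _ => 0, 1⟩⟩
noncomputable instance : Inv (Gn n) := ⟨fun f => ⟨fun j => -f.1 (f.2⁻¹ j), f.2⁻¹⟩⟩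

noncomputable instance : Group (Gn n) where
  mul_assoc f g h := Prod.ext (funext fun j => (add_assoc _ _ _).symm) rfl
  one_mul f := Prod.ext (funext fun j => add_zero _) (one_mul _)
  mul_one f := Prod.ext (funext fun j => zero_add _) (mul_one _)
  inv_mul_cancel f := Prod.ext
    (funext fun j => show f.1 j + -f.1 (f.2⁻¹ (f.2 j)) = 0 by simp)
    (inv_mul_cancel _)

@[simp] lemma mul_fst (f g : Gn n) (j : Fin n) : (f * g).1 j = g.1 j + f.1 (g.2 j) := rfl
@[simp] lemma mul_snd (f g : Gn n) : (f * g).2 = f.2 * g.2 := rfl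
@[simp] lemma one_fst (j : Fin n) : (1 : Gn n).1 j = 0 := rfl
@[simp] lemma one_snd : (1 : Gn n).2 = 1 := rfl
@[simp] lemma inv_fst (f : Gn n) (j : Fin n) : (f⁻¹).1 j = -f.1 (f.2⁻¹ j) := rfl
@[simp] lemma inv_snd (f : Gn n) : (f⁻¹).2 = f.2⁻¹ := rfl


/-- The map `A : G_n → 𝕋`, `A(α, σ) = 2(α_1 + ⋯ + α_n)` (it is a group homomorphism). -/
noncomputable def Afun (f : Gn n) : Circle1 := 2 • ∑ j, f.1 j

end Gn

open Finset

namespace StmtAux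

variable {n : ℕ}

private lemma permPowCardFix {n : ℕ} (σ : Equiv.Perm (Fin n)) (i : Fin n)
    (hi : ∀ j : Fin n, ∃ k : ℤ, (σ ^ k) i = j) : σ ^ n = 1 := by
  classical
  set H : AddSubgroup ℤ :=
    { carrier := {k : ℤ | (σ ^ k) i = i}
      zero_mem' := by simp
      add_mem' := by
        intro a b ha hb
        simp only [Set.mem_setOf_eq] at *
        rw [zpow_add, Equiv.Perm.mul_apply, hb, ha]
      neg_mem' := by
        intro a ha
        simp only [Set.mem_setOf_eq] at *
        have : (σ ^ (-a)) ((σ ^ a) i) = (σ ^ (-a)) i := by rw [ha]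
        rw [← Equiv.Perm.mul_apply, ← zpow_add, neg_add_cancel, zpow_zero] at this
        simpa using this.symm } with hHdef
  have hmem : ∀ k : ℤ, (σ ^ k) i = i ↔ k ∈ H := fun k => Iff.rfl
  have hdiff : ∀ a b : ℤ, (σ ^ a) i = (σ ^ b) i → (a - b) ∈ H := by
    intro a b hab
    have : (σ ^ (-b)) ((σ ^ a) i) = (σ ^ (-b)) ((σ ^ b) i) := by rw [hab]
    rw [← Equiv.Perm.mul_apply, ← Equiv.Perm.mul_apply, ← zpow_add, ← zpow_add,
      neg_add_cancel, zpow_zero, neg_add_eq_sub] at this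
    rw [← hmem]
    simpa using this
  have heq : ∀ a b : ℤ, (a - b) ∈ H → (σ ^ a) i = (σ ^ b) i := by
    intro a b hab
    have e : b + (a - b) = a := by ring
    rw [← e, zpow_add, Equiv.Perm.mul_apply, hab]
  obtain ⟨d, hd⟩ := Int.subgroup_cyclic H
  have hdvd : ∀ k : ℤ, k ∈ H ↔ d ∣ k := by
    intro k
    rw [hd, AddSubgroup.mem_closure_singleton]
    constructor
    · rintro ⟨t, ht⟩; exact ⟨t, by rw [← ht]; simp [mul_comm]⟩
    · rintro ⟨t, ht⟩; exact ⟨t, by rw [ht]; simp [mul_comm]⟩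
  obtain ⟨x, y, hxy, hfxy⟩ := Finite.exists_ne_map_eq_of_infinite (fun k : ℤ => (σ ^ k) i)
  have hd0 : d ≠ 0 := by
    rintro rfl
    have := (hdvd _).1 (hdiff x y hfxy)
    simp only [zero_dvd_iff, sub_eq_zero] at this
    exact hxy this
  set D : ℕ := d.natAbs with hD
  have hDpos : 0 < D := Int.natAbs_pos.mpr hd0
  have hdD : d ∣ (D : ℤ) := Int.dvd_natAbs.mpr dvd_rfl
  set φ : Fin D → Fin n := fun m => (σ ^ ((m : ℕ) : ℤ)) i with hφ
  have hinj : Function.Injective φ := by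
    intro a b hab
    have h1 : d ∣ ((a : ℕ) : ℤ) - ((b : ℕ) : ℤ) := (hdvd _).1 (hdiff _ _ hab)
    have h2 : (D : ℤ) ∣ ((a : ℕ) : ℤ) - ((b : ℕ) : ℤ) := by
      rcases h1 with ⟨t, ht⟩
      rcases Int.natAbs_eq d with h | h
      · exact ⟨t, by rw [ht, ← h]⟩
      · exact ⟨-t, by rw [ht]; nth_rewrite 1 [h]; ring⟩
    have ha := a.isLt; have hb := b.isLt
    rcases h2 with ⟨t, ht⟩
    have : ((a : ℕ) : ℤ) = ((b : ℕ) : ℤ) := by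
      rcases lt_trichotomy t 0 with h | h | h
      · nlinarith [ht, h]
      · subst h; simp at ht; omega
      · nlinarith [ht, h]
    exact Fin.ext (by exact_mod_cast this)
  have hsurj : Function.Surjective φ := by
    intro j
    obtain ⟨k, hk⟩ := hi j
    have hr0 : 0 ≤ k % (D : ℤ) := Int.emod_nonneg k (by exact_mod_cast hDpos.ne')
    have hrD : k % (D : ℤ) < (D : ℤ) := Int.emod_lt_of_pos k (by exact_mod_cast hDpos)
    refine ⟨⟨(k % (D : ℤ)).toNat, by omega⟩, ?_⟩
    have hmod : (σ ^ (k % (D : ℤ))) i = (σ ^ k) i := by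
      apply heq
      rw [hdvd]
      refine dvd_trans hdD ⟨-(k / (D : ℤ)), ?_⟩
      rw [Int.emod_def]; ring
    show (σ ^ (((k % (D : ℤ)).toNat : ℕ) : ℤ)) i = j
    rw [Int.toNat_of_nonneg hr0, hmod, hk]
  have hDn : D = n := by
    have := Fintype.card_of_bijective ⟨hinj, hsurj⟩
    simpa using this
  have hnH : (n : ℤ) ∈ H := by rw [hdvd, ← hDn]; exact hdD
  ext j
  obtain ⟨k, hk⟩ := hi j
  have hkey : (σ ^ ((n : ℤ) + k)) i = (σ ^ k) i := heq _ _ (by simpa using hnH)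
  rw [zpow_add, Equiv.Perm.mul_apply, zpow_natCast] at hkey
  simp only [Equiv.Perm.coe_one, id_eq]
  rw [← hk]
  exact congrArg Fin.val hkey

private noncomputable def psi [NeZero n] (σ : Equiv.Perm (Fin n)) (i : Fin n) : ZMod n → Fin n :=
  fun k => (σ ^ k.val) i

private lemma hvc [NeZero n] (k : ZMod n) : ((k.val : ℕ) : ZMod n) = k :=
  ZMod.natCast_rightInverse k

private lemma hvcz [NeZero n] (k : ZMod n) : (((k.val : ℕ) : ℤ) : ZMod n) = k := by
  push_cast
  exact hvc k

private lemma psi_zpow [NeZero n] (σ : Equiv.Perm (Fin n)) (i : Fin n)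
    (hone : σ ^ (n : ℤ) = 1) (k : ℤ) : (σ ^ k) i = psi σ i (k : ZMod n) := by
  have hmod : ∀ a b : ℤ, (a : ZMod n) = (b : ZMod n) → σ ^ a = σ ^ b := by
    intro a b hab
    obtain ⟨t, ht⟩ := ((ZMod.intCast_eq_intCast_iff a b n).1 hab).dvd
    have hb : b = a + n * t := by linarith
    rw [hb, zpow_add, zpow_mul, hone, one_zpow, mul_one]
  have h1 := hmod k (((k : ZMod n).val : ℕ) : ℤ) (by rw [hvcz])
  rw [h1, zpow_natCast]
  rfl

private lemma psi_succ [NeZero n] (σ : Equiv.Perm (Fin n)) (i : Fin n)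
    (hone : σ ^ (n : ℤ) = 1) (k : ZMod n) : σ (psi σ i k) = psi σ i (k + 1) := by
  have h2 : σ (psi σ i k) = (σ ^ ((k.val : ℤ) + 1)) i := by
    rw [add_comm, zpow_add, Equiv.Perm.mul_apply, zpow_one, zpow_natCast]
    rfl
  rw [h2, psi_zpow σ i hone]
  congr 1
  push_cast
  rw [hvc]

end StmtAux

open StmtAux in
/-- If `σ_f` is an `n`-cycle, then `f ∈ G_n` is strongly reversible in `G_n` iff `A(f) = 0`. -/
theorem stmt13 {n : ℕ} (f : Gn n)
    (hcycle : ∃ i : Fin n, ∀ j : Fin n, ∃ k : ℤ, (f.2 ^ k) i = j) :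
    (∃ T : Gn n, T * T = 1 ∧ T * f * T⁻¹ = f⁻¹) ↔ Gn.Afun f = 0 := by
  classical
  obtain ⟨α, σ⟩ := f
  simp only at hcycle
  constructor
  · rintro ⟨T, hT2, hTf⟩
    obtain ⟨β, τ⟩ := T
    have hconj : (⟨β, τ⟩ : Gn n) * (α, σ) = (α, σ)⁻¹ * ⟨β, τ⟩ := by
      rw [← hTf, mul_assoc, inv_mul_cancel, mul_one]
    have h1 : ∀ j, α j + β (σ j) = β j + -(α (σ⁻¹ (τ j))) := by
      intro j
      have := congrArg (fun g : Gn n => g.1 j) hconj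
      simpa using this
    have hsum : ∑ j, (α j + β (σ j)) = ∑ j, (β j + -(α (σ⁻¹ (τ j)))) :=
      Finset.sum_congr rfl (fun j _ => h1 j)
    rw [Finset.sum_add_distrib, Finset.sum_add_distrib] at hsum
    have e1 : ∑ j, β (σ j) = ∑ j, β j := Equiv.sum_comp σ β
    have e2 : ∑ j, -(α (σ⁻¹ (τ j))) = -∑ j, α j := by
      rw [Finset.sum_neg_distrib]
      congr 1
      exact Equiv.sum_comp (τ.trans σ⁻¹) α
    rw [e1, e2] at hsum
    have hfinal : (∑ j, α j) + (∑ j, α j) = 0 := by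
      calc (∑ j, α j) + (∑ j, α j)
          = ((∑ j, α j) + (∑ j, β j)) + ((∑ j, α j) - (∑ j, β j)) := by abel
        _ = ((∑ j, β j) + -(∑ j, α j)) + ((∑ j, α j) - (∑ j, β j)) := by rw [hsum]
        _ = 0 := by abel
    show (2 : ℕ) • ∑ j, α j = 0
    rw [two_nsmul]
    exact hfinal
  · intro hA
    obtain ⟨i, hi⟩ := hcycle
    haveI : NeZero n := ⟨i.pos.ne'⟩
    have hone : σ ^ (n : ℤ) = 1 := by
      rw [zpow_natCast]; exact permPowCardFix σ i hi
    set ψ : ZMod n → Fin n := psi σ i with hψ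
    have hψbij : Function.Bijective ψ := by
      rw [Fintype.bijective_iff_surjective_and_card]
      constructor
      · intro j
        obtain ⟨k, hk⟩ := hi j
        exact ⟨(k : ZMod n), (psi_zpow σ i hone k).symm.trans hk⟩
      · simp [ZMod.card]
    set e : ZMod n ≃ Fin n := Equiv.ofBijective ψ hψbij with he
    have hesymm : ∀ k : ZMod n, e.symm (ψ k) = k := fun k => by
      rw [show ψ k = e k from rfl, Equiv.symm_apply_apply]
    have hψsucc : ∀ k : ZMod n, σ (ψ k) = ψ (k + 1) := psi_succ σ i hone
    have hσinv : ∀ k : ZMod n, σ⁻¹ (ψ k) = ψ (k - 1) := by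
      intro k
      have h := hψsucc (k - 1)
      rw [sub_add_cancel] at h
      rw [← h, ← Equiv.Perm.mul_apply, inv_mul_cancel, Equiv.Perm.one_apply]
    -- the cocycle data
    set c : ZMod n → Circle1 := fun k => -(α (ψ k)) - α (ψ (-k - 1)) with hc
    set b : ZMod n → Circle1 := fun k => ∑ m ∈ Finset.range k.val, c ((m : ℕ) : ZMod n) with hb
    have hcsymm : ∀ k : ZMod n, c (-1 - k) = c k := by
      intro k
      show -(α (ψ (-1 - k))) - α (ψ (-(-1 - k) - 1)) = -(α (ψ k)) - α (ψ (-k - 1))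
      have h1 : -((-1 : ZMod n) - k) - 1 = k := by ring
      have h2 : (-1 : ZMod n) - k = -k - 1 := by ring
      rw [h1, h2]
      abel
    have hs2 : (∑ j, α j) + (∑ j, α j) = 0 := by
      have : (2 : ℕ) • ∑ j, α j = 0 := hA
      rwa [two_nsmul] at this
    have hsumc : ∑ k : ZMod n, c k = 0 := by
      have e1 : ∑ k : ZMod n, α (ψ k) = ∑ j, α j := Equiv.sum_comp e α
      have hginv : Function.Involutive (fun k : ZMod n => -k - 1) := fun k => by ring
      have e2 : ∑ k : ZMod n, α (ψ (-k - 1)) = ∑ k : ZMod n, α (ψ k) :=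
        Equiv.sum_comp hginv.toPerm (fun k => α (ψ k))
      calc ∑ k : ZMod n, c k
          = ∑ k : ZMod n, (-(α (ψ k)) - α (ψ (-k - 1))) := rfl
        _ = -(∑ k : ZMod n, α (ψ k)) - ∑ k : ZMod n, α (ψ (-k - 1)) := by
            rw [Finset.sum_sub_distrib, Finset.sum_neg_distrib]
        _ = -(∑ j, α j) - ∑ j, α j := by rw [e1, e2, e1]
        _ = -((∑ j, α j) + ∑ j, α j) := by abel
        _ = 0 := by rw [hs2, neg_zero]
    have hrange : ∑ m ∈ Finset.range n, c ((m : ℕ) : ZMod n) = ∑ k : ZMod n, c k := by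
      have hb2 : Function.Bijective (fun m : Fin n => ((m : ℕ) : ZMod n)) := by
        rw [Fintype.bijective_iff_injective_and_card]
        constructor
        · intro x y hxy
          have := congrArg ZMod.val hxy
          rw [ZMod.val_cast_of_lt x.isLt, ZMod.val_cast_of_lt y.isLt] at this
          exact Fin.ext this
        · simp [ZMod.card]
      calc ∑ m ∈ Finset.range n, c ((m : ℕ) : ZMod n)
          = ∑ m : Fin n, c (((m : ℕ) : ZMod n)) := (Fin.sum_univ_eq_sum_range _ n).symm
        _ = ∑ k : ZMod n, c k := Fintype.sum_bijective _ hb2 _ _ (fun x => rfl)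
    have hb0 : b 0 = 0 := by
      simp only [hb, ZMod.val_zero, Finset.range_zero, Finset.sum_empty]
    have hL1 : ∀ k : ZMod n, b (k + 1) = b k + c k := by
      intro k
      have hksucc : k + 1 = (((k.val + 1 : ℕ)) : ZMod n) := by push_cast; rw [hvc]
      by_cases hlt : k.val + 1 < n
      · have h1 : (k + 1).val = k.val + 1 := by
          rw [hksucc, ZMod.val_cast_of_lt hlt]
        simp only [hb]
        rw [h1, Finset.sum_range_succ, hvc]
      · have hn : k.val + 1 = n := by have := ZMod.val_lt k; omega
        have h0 : k + 1 = 0 := by rw [hksucc, hn, ZMod.natCast_self]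
        rw [h0, hb0]
        have : b k + c k = ∑ m ∈ Finset.range n, c ((m : ℕ) : ZMod n) := by
          simp only [hb]
          have hrr : Finset.range n = Finset.range (k.val + 1) := by rw [hn]
          rw [hrr, Finset.sum_range_succ, hvc]
        rw [this, hrange, hsumc]
    have hL2 : ∀ k : ZMod n, b k + b (-k) = 0 := by
      intro k
      by_cases hk0 : k = 0
      · rw [hk0, neg_zero, hb0, add_zero]
      · have hv1 : 1 ≤ k.val := Nat.one_le_iff_ne_zero.mpr
          (fun h => hk0 ((ZMod.val_eq_zero k).mp h))
        have hvlt := ZMod.val_lt k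
        have hneg : (-k).val = n - k.val := by rw [ZMod.neg_val]; simp [hk0]
        have hre : ∑ m ∈ Finset.range (n - k.val), c ((m : ℕ) : ZMod n)
            = ∑ m ∈ Finset.Ico k.val n, c ((m : ℕ) : ZMod n) := by
          refine Finset.sum_nbij' (fun m => n - 1 - m) (fun m => n - 1 - m) ?_ ?_ ?_ ?_ ?_
          · intro a ha; simp only [Finset.mem_range] at ha; simp only [Finset.mem_Ico]; omega
          · intro a ha; simp only [Finset.mem_Ico] at ha; simp only [Finset.mem_range]; omega
          · intro a ha; simp only [Finset.mem_range] at ha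
            show n - 1 - (n - 1 - a) = a; omega
          · intro a ha; simp only [Finset.mem_Ico] at ha
            show n - 1 - (n - 1 - a) = a; omega
          · intro a ha
            simp only [Finset.mem_range] at ha
            have hcast : (((n - 1 - a : ℕ)) : ZMod n) = -1 - ((a : ℕ) : ZMod n) := by
              have h1 : (1 : ℕ) ≤ n := Nat.one_le_iff_ne_zero.mpr (NeZero.ne n)
              have h2 : a ≤ n - 1 := by omega
              rw [Nat.cast_sub h2, Nat.cast_sub h1, ZMod.natCast_self, Nat.cast_one, zero_sub]
            rw [hcast, hcsymm]
        have hbk : b (-k) = ∑ m ∈ Finset.Ico k.val n, c ((m : ℕ) : ZMod n) := by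
          show (∑ m ∈ Finset.range (-k).val, c ((m : ℕ) : ZMod n)) = _
          rw [hneg, hre]
        rw [hbk]
        show (∑ m ∈ Finset.range k.val, c ((m : ℕ) : ZMod n))
            + (∑ m ∈ Finset.Ico k.val n, c ((m : ℕ) : ZMod n)) = 0
        rw [Finset.sum_range_add_sum_Ico _ (le_of_lt hvlt), hrange, hsumc]
    -- build the reverser
    set τ : Equiv.Perm (Fin n) := (e.symm.trans (Equiv.neg (ZMod n))).trans e with hτ
    have hτψ : ∀ k : ZMod n, τ (ψ k) = ψ (-k) := by
      intro k
      simp only [hτ, Equiv.trans_apply, hesymm, Equiv.neg_apply]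
      rfl
    set β : Fin n → Circle1 := fun j => b (e.symm j) with hβ
    have hβψ : ∀ k : ZMod n, β (ψ k) = b k := fun k => by
      simp only [hβ, hesymm]
    refine ⟨(β, τ), ?_, ?_⟩
    · apply Prod.ext
      · funext j
        obtain ⟨k, hk⟩ := hψbij.2 j
        rw [← hk]
        show β (ψ k) + β (τ (ψ k)) = 0
        rw [hτψ, hβψ, hβψ]
        exact hL2 k
      · apply Equiv.ext
        intro j
        obtain ⟨k, hk⟩ := hψbij.2 j
        rw [← hk]
        show τ (τ (ψ k)) = ψ k
        rw [hτψ, hτψ, neg_neg]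
    · have key : (⟨β, τ⟩ : Gn n) * (α, σ) = (α, σ)⁻¹ * ⟨β, τ⟩ := by
        apply Prod.ext
        · funext j
          obtain ⟨k, hk⟩ := hψbij.2 j
          rw [← hk]
          show α (ψ k) + β (σ (ψ k)) = β (ψ k) + -(α (σ⁻¹ (τ (ψ k))))
          rw [hψsucc, hτψ, hσinv, hβψ, hβψ, hL1]
          have harg : -k - 1 = -k - 1 := rfl
          simp only [hc]
          abel
        · apply Equiv.ext
          intro j
          obtain ⟨k, hk⟩ := hψbij.2 j
          rw [← hk]
          show τ (σ (ψ k)) = σ⁻¹ (τ (ψ k))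
          rw [hψsucc, hτψ, hτψ, hσinv]
          congr 1
          ring
      rw [key, mul_assoc, mul_inv_cancel, mul_one]
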